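/- Let {H_iα_i}_{i=1}^s be a coset partition of F_n (n ≥ 2) with each H_i of index d_i > 1, and let h_i be the period of the transition matrix of the Schreier graph of H_i. If h := max_i h_i > 1, then there exist j ≠ k with h_j = h_k = h. -/

import Mathlib

open Finset

namespace MPR

/-- iterates of a bijection on a finite type return to start -/
lemma iterate_ret {d : ℕ} {f : Fin d → Fin d} (hinj : Function.Injective f) (p : Fin d) :
    ∃ m : ℕ, 0 < m ∧ f^[m] p = p := by
  have hbij : Function.Bijective f := Finite.injective_iff_bijective.mp hinj
  set e : Equiv.Perm (Fin d) := Equiv.ofBijective f hbij with he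
  have hiter : ∀ m q, (e ^ m) q = f^[m] q := by
    intro m
    induction m with
    | zero => simp
    | succ m ih =>
        intro q
        rw [pow_succ']
        simp only [Equiv.Perm.mul_apply]
        rw [ih q]
        show f (f^[m] q) = f^[m] (f q)
        rw [← Function.iterate_succ_apply' f m q, ← Function.iterate_succ_apply f m q]
  exact ⟨orderOf e, orderOf_pos e, by rw [← hiter, pow_orderOf_eq_one]; rfl⟩

variable {n d : ℕ} (c : FreeGroup (Fin n) → Fin d)

section Graph

variable (hS : Function.Surjective c)
variable (hrc : ∀ x y z : FreeGroup (Fin n), c (x * z) = c (y * z) ↔ c x = c y)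

/-- one step of the Schreier graph -/
noncomputable def estep (a : Fin n) (p : Fin d) : Fin d :=
  c (Function.surjInv hS p * FreeGroup.of a)

include hrc

lemma estep_c (a : Fin n) (g : FreeGroup (Fin n)) :
    estep c hS a (c g) = c (g * FreeGroup.of a) := by
  unfold estep
  exact (hrc _ _ _).mpr (Function.surjInv_eq hS (c g))

lemma estep_inj (a : Fin n) : Function.Injective (estep c hS a) := by
  intro p q h
  unfold estep at h
  have := (hrc _ _ _).mp h
  rwa [Function.surjInv_eq hS, Function.surjInv_eq hS] at this

omit hrc

/-- run a list of generators -/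
noncomputable def runL (l : List (Fin n)) (p : Fin d) : Fin d :=
  l.foldl (fun p a => estep c hS a p) p

@[simp] lemma runL_nil (p : Fin d) : runL c hS [] p = p := rfl

@[simp] lemma runL_cons (a : Fin n) (l : List (Fin n)) (p : Fin d) :
    runL c hS (a :: l) p = runL c hS l (estep c hS a p) := rfl

include hrc in
lemma runL_c (l : List (Fin n)) (g : FreeGroup (Fin n)) :
    runL c hS l (c g) = c (g * (l.map FreeGroup.of).prod) := by
  induction l generalizing g with
  | nil => simp
  | cons a t ih =>
      rw [runL_cons, estep_c c hS hrc, ih]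
      simp [mul_assoc]

lemma runL_replicate (m : ℕ) (a : Fin n) (p : Fin d) :
    runL c hS (List.replicate m a) p = (estep c hS a)^[m] p := by
  induction m generalizing p with
  | zero => simp
  | succ m ih =>
      rw [List.replicate_succ, runL_cons, ih, Function.iterate_succ_apply]

include hrc

/-- there is a positive-length closed walk at every vertex -/
lemma exists_closed_walk [NeZero n] (p : Fin d) :
    ∃ m : ℕ, 0 < m ∧ runL c hS (List.replicate m (0 : Fin n)) p = p := by
  obtain ⟨m, hm, hmp⟩ := iterate_ret (estep_inj c hS hrc (0 : Fin n)) p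
  exact ⟨m, hm, by rw [runL_replicate]; exact hmp⟩

/-- every vertex reaches every vertex -/
lemma reach_all [NeZero n] (p q : Fin d) :
    ∃ l : List (Fin n), runL c hS l p = q := by
  have hback : ∀ (a : Fin n) (x : Fin d), ∃ l : List (Fin n),
      runL c hS l (estep c hS a x) = x := by
    intro a x
    obtain ⟨m, hm, hmp⟩ := iterate_ret (estep_inj c hS hrc a) x
    obtain ⟨m', rfl⟩ : ∃ m', m = m' + 1 := ⟨m - 1, (Nat.succ_pred_eq_of_pos hm).symm⟩
    refine ⟨List.replicate m' a, ?_⟩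
    rw [runL_replicate]
    rw [Function.iterate_succ_apply] at hmp
    exact hmp
  have key : ∀ w g : FreeGroup (Fin n), ∃ l : List (Fin n),
      runL c hS l (c g) = c (g * w) := by
    intro w
    induction w using FreeGroup.induction_on with
    | C1 => exact fun g => ⟨[], by simp⟩
    | of a => exact fun g => ⟨[a], by
        rw [runL_cons, runL_nil]; exact estep_c c hS hrc a g⟩
    | inv_of a _ =>
        intro g
        obtain ⟨l, hl⟩ := hback a (c (g * (FreeGroup.of a)⁻¹))
        rw [estep_c c hS hrc] at hl
        have : g * (FreeGroup.of a)⁻¹ * FreeGroup.of a = g := by group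
        rw [this] at hl
        exact ⟨l, hl⟩
    | mul x y hx hy =>
        intro g
        obtain ⟨l1, hl1⟩ := hx g
        obtain ⟨l2, hl2⟩ := hy (g * x)
        refine ⟨l1 ++ l2, ?_⟩
        unfold runL at *
        rw [List.foldl_append, hl1, hl2, mul_assoc]
  obtain ⟨g, rfl⟩ := hS p
  obtain ⟨g', rfl⟩ := hS q
  obtain ⟨l, hl⟩ := key (g⁻¹ * g') g
  rw [mul_inv_cancel_left] at hl
  exact ⟨l, hl⟩

end Graph

end MPR

namespace MPR2
open MPR

variable {n d : ℕ} (c : FreeGroup (Fin n) → Fin d)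
variable (hS : Function.Surjective c)
variable (A : Matrix (Fin d) (Fin d) ℕ)
variable (hA : ∀ p q, A p q = (Finset.univ.filter (fun a : Fin n => estep c hS a p = q)).card)

include hA

lemma row_sum (p : Fin d) : ∑ q, A p q = n := by
  have h := Finset.card_eq_sum_card_fiberwise
    (f := fun a : Fin n => estep c hS a p) (s := Finset.univ) (t := Finset.univ)
    (fun x _ => Finset.mem_univ _)
  simp only [Finset.card_univ, Fintype.card_fin] at h
  exact (Finset.sum_congr rfl fun q _ => (hA p q)).trans h.symm

lemma pow_row_sum (m : ℕ) (p : Fin d) : ∑ q, (A ^ m) p q = n ^ m := by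
  induction m generalizing p with
  | zero => simp [Matrix.one_apply]
  | succ m ih =>
      rw [pow_succ']
      simp only [Matrix.mul_apply]
      rw [Finset.sum_comm]
      have : ∀ q', ∑ q, A p q' * (A ^ m) q' q = A p q' * n ^ m := by
        intro q'
        rw [← Finset.mul_sum, ih q']
      rw [Finset.sum_congr rfl fun q' _ => this q', ← Finset.sum_mul, row_sum c hS A hA p,
        pow_succ']

lemma entry_le (m : ℕ) (p q : Fin d) : (A ^ m) p q ≤ n ^ m := by
  rw [← pow_row_sum c hS A hA m p]
  exact Finset.single_le_sum (fun i _ => Nat.zero_le _) (Finset.mem_univ q)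

omit hA in
lemma pos_mul (m l : ℕ) (p q r : Fin d) :
    (A ^ m) p q * (A ^ l) q r ≤ (A ^ (m + l)) p r := by
  rw [pow_add, Matrix.mul_apply]
  exact Finset.single_le_sum (f := fun x => (A ^ m) p x * (A ^ l) x r)
    (fun i _ => Nat.zero_le _) (Finset.mem_univ q)

/-- the counting lemma: entries of powers count walks -/
lemma CL (m : ℕ) (p q : Fin d) :
    (A ^ m) p q =
      (Finset.univ.filter (fun w : Fin m → Fin n => runL c hS (List.ofFn w) p = q)).card := by
  induction m generalizing p with
  | zero =>
      by_cases h : p = q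
      · subst h
        rw [pow_zero, Matrix.one_apply_eq]
        rw [Finset.filter_true_of_mem (fun w _ => by simp)]
        simp
      · rw [pow_zero, Matrix.one_apply_ne h]
        rw [Finset.filter_false_of_mem (fun w _ => by simpa using h)]
        simp
  | succ m ih =>
      rw [pow_succ', Matrix.mul_apply]
      have key : ∀ q' : Fin d,
          A p q' * (A ^ m) q' q =
          ((Finset.univ.filter
            (fun w : Fin (m+1) → Fin n => runL c hS (List.ofFn w) p = q)).filter
              (fun w => estep c hS (w 0) p = q')).card := by
        intro q'
        rw [hA p q', ih q']
        rw [← Finset.card_product]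
        rw [Finset.filter_filter]
        apply Finset.card_bij'
          (i := fun (x : Fin n × (Fin m → Fin n)) _ => Fin.cons x.1 x.2)
          (j := fun (w : Fin (m+1) → Fin n) _ => (w 0, Fin.tail w))
        · intro x hx
          simp only [Finset.mem_product, Finset.mem_filter, Finset.mem_univ, true_and] at hx
          simp only [Finset.mem_filter, Finset.mem_univ, true_and]
          constructor
          · rw [List.ofFn_succ]
            simp only [Fin.cons_zero, Fin.cons_succ, runL_cons]
            rw [hx.1]
            convert hx.2 using 2
          · simp [hx.1]
        · intro w hw
          simp only [Finset.mem_filter, Finset.mem_univ, true_and] at hw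
          simp only [Finset.mem_product, Finset.mem_filter, Finset.mem_univ, true_and]
          refine ⟨hw.2, ?_⟩
          have := hw.1
          rw [List.ofFn_succ, runL_cons, hw.2] at this
          convert this using 3
          rfl
        · intro x _
          simp [Fin.tail_cons]
        · intro w _
          simp [Fin.cons_self_tail]
      rw [Finset.sum_congr rfl fun q' _ => key q']
      rw [← Finset.card_eq_sum_card_fiberwise (fun w _ => Finset.mem_univ _)]

lemma exists_word_of_pos (m : ℕ) (p q : Fin d) (h : 0 < (A ^ m) p q) :
    ∃ w : Fin m → Fin n, runL c hS (List.ofFn w) p = q := by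
  rw [CL c hS A hA] at h
  obtain ⟨w, hw⟩ := Finset.card_pos.mp h
  exact ⟨w, (Finset.mem_filter.mp hw).2⟩

lemma pos_of_list (l : List (Fin n)) (p : Fin d) :
    0 < (A ^ l.length) p (runL c hS l p) := by
  rw [CL c hS A hA]
  apply Finset.card_pos.mpr
  refine ⟨fun i => l.get i, ?_⟩
  simp only [Finset.mem_filter, Finset.mem_univ, true_and]
  congr 1
  exact List.ofFn_get l

end MPR2

namespace MPR3
open MPR MPR2

variable {n d : ℕ} (c : FreeGroup (Fin n) → Fin d)
variable (hS : Function.Surjective c)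
variable (A : Matrix (Fin d) (Fin d) ℕ)
variable (hA : ∀ p q, A p q = (Finset.univ.filter (fun a : Fin n => estep c hS a p = q)).card)

/-- the complex transition matrix -/
noncomputable def Ac : Matrix (Fin d) (Fin d) ℂ := A.map (Nat.cast : ℕ → ℂ)

lemma Ac_pow (m : ℕ) (p q : Fin d) : ((Ac A) ^ m) p q = ((A ^ m) p q : ℂ) := by
  suffices h : (Ac A) ^ m = (A ^ m).map (Nat.cast : ℕ → ℂ) by rw [h]; rfl
  induction m with
  | zero =>
      rw [pow_zero, pow_zero, Matrix.map_one _ Nat.cast_zero Nat.cast_one]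
  | succ m ih =>
      rw [pow_succ, pow_succ, ih]
      exact (Matrix.map_mul (f := Nat.castRingHom ℂ) (L := A ^ m) (M := A)).symm

variable (z : ℂ) (hz : (n : ℝ) * ‖z‖ < 1)

include hA hz in
lemma summable_entry (p q : Fin d) :
    Summable (fun m : ℕ => ((A ^ m) p q : ℂ) * z ^ m) := by
  apply Summable.of_norm_bounded
    (summable_geometric_of_lt_one (by positivity) hz)
  intro m
  rw [norm_mul, norm_pow, mul_pow]
  have h1 : ‖(((A ^ m) p q : ℕ) : ℂ)‖ = (((A ^ m) p q : ℕ) : ℝ) := by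
    rw [Complex.norm_natCast]
  rw [h1]
  apply mul_le_mul_of_nonneg_right _ (by positivity)
  exact_mod_cast entry_le c hS A hA m p q

/-- matrix generating function -/
noncomputable def Mmat : Matrix (Fin d) (Fin d) ℂ :=
  Matrix.of fun p q => ∑' m : ℕ, ((A ^ m) p q : ℂ) * z ^ m

include hA hz

lemma Mmat_rec (p q : Fin d) :
    Mmat A z p q = (1 : Matrix (Fin d) (Fin d) ℂ) p q
      + z * ((Ac A) * Mmat A z) p q := by
  have hsum := summable_entry c hS A hA z hz
  have h0 : Mmat A z p q
      = ((A ^ 0) p q : ℂ) * z ^ 0 + ∑' m : ℕ, ((A ^ (m + 1)) p q : ℂ) * z ^ (m + 1) :=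
    (hsum p q).tsum_eq_zero_add
  have h1 : ((A ^ 0) p q : ℂ) * z ^ 0 = (1 : Matrix (Fin d) (Fin d) ℂ) p q := by
    rw [pow_zero, pow_zero, mul_one]
    by_cases h : p = q
    · subst h; rw [Matrix.one_apply_eq, Matrix.one_apply_eq]; norm_num
    · rw [Matrix.one_apply_ne h, Matrix.one_apply_ne h]; norm_num
  have h2 : ∀ m : ℕ, ((A ^ (m + 1)) p q : ℂ) * z ^ (m + 1)
      = ∑ q', (A p q' : ℂ) * (((A ^ m) q' q : ℂ) * z ^ m) * z := by
    intro m
    rw [pow_succ' A m, Matrix.mul_apply]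
    push_cast
    rw [Finset.sum_mul]
    congr 1
    ext q'
    ring
  have h3 : ∑' m : ℕ, ((A ^ (m + 1)) p q : ℂ) * z ^ (m + 1)
      = ∑ q', ∑' m : ℕ, (A p q' : ℂ) * (((A ^ m) q' q : ℂ) * z ^ m) * z := by
    rw [← Summable.tsum_finsetSum]
    · exact tsum_congr h2
    · intro q' _
      exact (((hsum q' q).mul_left _).mul_right _)
  have h4 : ∀ q', ∑' m : ℕ, (A p q' : ℂ) * (((A ^ m) q' q : ℂ) * z ^ m) * z
      = (A p q' : ℂ) * Mmat A z q' q * z := by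
    intro q'
    rw [tsum_mul_right, tsum_mul_left]
    rfl
  rw [h0, h1, h3, Finset.sum_congr rfl fun q' _ => h4 q']
  congr 1
  rw [Matrix.mul_apply, Finset.mul_sum]
  congr 1
  ext q'
  have : (Ac A) p q' = (A p q' : ℂ) := rfl
  rw [this]
  ring

lemma one_sub_mul_Mmat :
    (1 - z • (Ac A)) * Mmat A z = 1 := by
  have hrec : Mmat A z = 1 + z • ((Ac A) * Mmat A z) := by
    ext p q
    rw [Matrix.add_apply, Matrix.smul_apply, smul_eq_mul]
    exact Mmat_rec c hS A hA z hz p q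
  rw [sub_mul, one_mul, Matrix.smul_mul]
  nth_rewrite 1 [hrec]
  abel

lemma det_one_sub_ne_zero : (1 - z • (Ac A)).det ≠ 0 := by
  intro h
  have := congrArg Matrix.det (one_sub_mul_Mmat c hS A hA z hz)
  rw [Matrix.det_mul, h, zero_mul, Matrix.det_one] at this
  exact zero_ne_one this

lemma Mmat_eq_adjugate (u v : Fin d) :
    Mmat A z u v = ((1 - z • (Ac A)).det)⁻¹ * (1 - z • (Ac A)).adjugate u v := by
  have h2 : (1 - z • (Ac A))⁻¹ = Mmat A z :=
    Matrix.inv_eq_right_inv (one_sub_mul_Mmat c hS A hA z hz)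
  rw [← h2, Matrix.inv_def, Ring.inverse_eq_inv, Matrix.smul_apply, smul_eq_mul]

end MPR3

namespace MPR4
open MPR MPR2 MPR3

/-- equality case in the triangle inequality for a sum of `N` complex numbers -/
lemma all_eq_of_sum {N : ℕ} (w : Fin N → ℂ) (ξ : ℂ)
    (hle : ∀ a, ‖w a‖ ≤ ‖ξ‖)
    (hsum : ∑ a, w a = (N : ℂ) * ξ) : ∀ a, w a = ξ := by
  have hφ : ∀ a, ((starRingEnd ℂ) ξ * (ξ - w a)).re
      = Complex.normSq ξ - ((starRingEnd ℂ) ξ * w a).re := by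
    intro a
    rw [mul_sub, Complex.sub_re]
    congr 2
    rw [mul_comm, Complex.mul_conj]
    simp
  have hle2 : ∀ a, ((starRingEnd ℂ) ξ * w a).re ≤ Complex.normSq ξ := by
    intro a
    calc ((starRingEnd ℂ) ξ * w a).re ≤ ‖(starRingEnd ℂ) ξ * w a‖ :=
          Complex.re_le_norm _
      _ = ‖ξ‖ * ‖w a‖ := by rw [norm_mul, Complex.norm_conj]
      _ ≤ ‖ξ‖ * ‖ξ‖ :=
          mul_le_mul_of_nonneg_left (hle a) (norm_nonneg _)
      _ = Complex.normSq ξ := by rw [Complex.normSq_eq_norm_sq, sq]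
  have hnonneg : ∀ a ∈ Finset.univ, 0 ≤ ((starRingEnd ℂ) ξ * (ξ - w a)).re := by
    intro a _
    rw [hφ a]
    linarith [hle2 a]
  have hsum0 : ∑ a, ((starRingEnd ℂ) ξ * (ξ - w a)).re = 0 := by
    rw [← Complex.re_sum, ← Finset.mul_sum, Finset.sum_sub_distrib, hsum,
      Finset.sum_const, Finset.card_univ, Fintype.card_fin, nsmul_eq_mul, sub_self,
      mul_zero, Complex.zero_re]
  have hzero : ∀ a, ((starRingEnd ℂ) ξ * (ξ - w a)).re = 0 := by
    intro a
    have := (Finset.sum_eq_zero_iff_of_nonneg hnonneg).mp hsum0 a (Finset.mem_univ a)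
    exact this
  intro a
  have hre : ((starRingEnd ℂ) ξ * w a).re = Complex.normSq ξ := by
    have := hzero a
    rw [hφ a] at this
    linarith
  by_cases hξ : ξ = 0
  · subst hξ
    have := hle a
    simp only [norm_zero] at this
    have : ‖w a‖ = 0 := le_antisymm this (norm_nonneg _)
    rwa [norm_eq_zero] at this
  -- w a = ξ
  · set zz := (starRingEnd ℂ) ξ * w a with hzz
    have habs : ‖zz‖ ≤ Complex.normSq ξ := by
      rw [hzz, norm_mul, Complex.norm_conj, Complex.normSq_eq_norm_sq, sq]
      exact mul_le_mul_of_nonneg_left (hle a) (norm_nonneg _)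
    have hre_abs : zz.re = ‖zz‖ :=
      le_antisymm (Complex.re_le_norm zz) (by rw [hre]; exact habs)
    have him : zz.im = 0 := by
      have h1 : ‖zz‖ ^ 2 = zz.re ^ 2 + zz.im ^ 2 := by
        rw [Complex.sq_norm, Complex.normSq_apply]; ring
      rw [← hre_abs] at h1
      nlinarith [sq_nonneg zz.im]
    have hzzval : zz = (Complex.normSq ξ : ℝ) := by
      apply Complex.ext
      · rw [hre]; simp
      · rw [him]; simp
    have hξξ : (starRingEnd ℂ) ξ * ξ = (Complex.normSq ξ : ℝ) := by
      rw [mul_comm, Complex.mul_conj]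
    have : (starRingEnd ℂ) ξ * w a = (starRingEnd ℂ) ξ * ξ := by
      rw [← hzz, hzzval, hξξ]
    exact mul_left_cancel₀ (by simpa using hξ) this

variable {n d : ℕ} (c : FreeGroup (Fin n) → Fin d)
variable (hS : Function.Surjective c)
variable (hrc : ∀ x y z : FreeGroup (Fin n), c (x * z) = c (y * z) ↔ c x = c y)
variable (A : Matrix (Fin d) (Fin d) ℕ)
variable (hA : ∀ p q, A p q = (Finset.univ.filter (fun a : Fin n => estep c hS a p = q)).card)

include hA in
lemma sum_estep (v : Fin d → ℂ) (p : Fin d) :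
    ∑ q, (A p q : ℂ) * v q = ∑ a : Fin n, v (estep c hS a p) := by
  rw [← Finset.sum_fiberwise Finset.univ (fun a : Fin n => estep c hS a p)
    (fun a : Fin n => v (estep c hS a p))]
  apply Finset.sum_congr rfl
  intro q _
  rw [hA]
  have hcg : ∀ a ∈ Finset.univ.filter (fun a : Fin n => estep c hS a p = q),
      v (estep c hS a p) = v q := fun a ha => by rw [(Finset.mem_filter.mp ha).2]
  rw [Finset.sum_congr rfl hcg, Finset.sum_const, nsmul_eq_mul]

include hrc hA in
lemma spectral (ζ : ℂ) (hζabs : ‖ζ‖ = 1) (v : Fin d → ℂ) (hv : v ≠ 0)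
    (heig : (Ac A).mulVec v = ((n : ℂ) * ζ) • v) :
    ∀ m : ℕ, 0 < (A ^ m) (c 1) (c 1) → ζ ^ m = 1 := by
  obtain ⟨p0, -, hp0⟩ := Finset.exists_max_image Finset.univ
    (fun p => ‖v p‖) ⟨c 1, Finset.mem_univ _⟩
  set V := ‖v p0‖ with hVdef
  have hVpos : 0 < V := by
    obtain ⟨q, hq⟩ := Function.ne_iff.mp hv
    calc (0 : ℝ) < ‖v q‖ := by
          simpa using norm_pos_iff.mpr hq
      _ ≤ V := hp0 q (Finset.mem_univ q)
  have key : ∀ p, ‖v p‖ = V → ∀ a, v (estep c hS a p) = ζ * v p := by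
    intro p hpV
    apply all_eq_of_sum (w := fun a => v (estep c hS a p)) (ξ := ζ * v p)
    · intro a
      rw [norm_mul, hζabs, one_mul, hpV]
      exact hp0 _ (Finset.mem_univ _)
    · rw [← sum_estep c hS A hA v p]
      have hthis := congrFun heig p
      have hmv : ((Ac A).mulVec v) p = ∑ q, (A p q : ℂ) * v q := by
        simp [Matrix.mulVec, dotProduct, Ac, Matrix.map_apply]
      rw [hmv, Pi.smul_apply, smul_eq_mul] at hthis
      rw [hthis]
      ring
  set T : Finset (Fin d) := Finset.univ.filter (fun p => ‖v p‖ = V) with hT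
  have hmemT : ∀ p, p ∈ T ↔ ‖v p‖ = V := by
    intro p
    simp [hT]
  have Tstep : ∀ p, p ∈ T → ∀ a, estep c hS a p ∈ T := by
    intro p hpT a
    rw [hmemT] at hpT ⊢
    rw [key p hpT a, norm_mul, hζabs, one_mul, hpT]
  have Tback : ∀ (a : Fin n) (p : Fin d), estep c hS a p ∈ T → p ∈ T := by
    intro a p hp
    have himg : T.image (estep c hS a) ⊆ T := by
      intro x hx
      obtain ⟨y, hy, rfl⟩ := Finset.mem_image.mp hx
      exact Tstep y hy a
    have hcard : T.card ≤ (T.image (estep c hS a)).card := by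
      rw [Finset.card_image_of_injective T (estep_inj c hS hrc a)]
    have heq : T.image (estep c hS a) = T := Finset.eq_of_subset_of_card_le himg hcard
    rw [← heq] at hp
    obtain ⟨y, hy, hyx⟩ := Finset.mem_image.mp hp
    rwa [estep_inj c hS hrc a hyx] at hy
  have Tall : ∀ p, p ∈ T := by
    have claim : ∀ w g, c g ∈ T → c (g * w) ∈ T := by
      intro w
      induction w using FreeGroup.induction_on with
      | C1 => intro g hg; simpa using hg
      | of a =>
          intro g hg
          show c (g * FreeGroup.of a) ∈ T
          have : c (g * FreeGroup.of a) = estep c hS a (c g) := (estep_c c hS hrc a g).symm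
          rw [this]
          exact Tstep _ hg a
      | inv_of a _ =>
          intro g hg
          show c (g * (FreeGroup.of a)⁻¹) ∈ T
          apply Tback a
          rw [estep_c c hS hrc]
          have : g * (FreeGroup.of a)⁻¹ * FreeGroup.of a = g := by group
          rwa [this]
      | mul x y hx hy =>
          intro g hg
          have := hy (g * x) (hx g hg)
          rwa [mul_assoc] at this
    intro p
    obtain ⟨g, rfl⟩ := hS p
    obtain ⟨g0, hg0⟩ := hS p0
    have hp0T : c g0 ∈ T := by
      rw [hmemT, hg0]
    have := claim (g0⁻¹ * g) g0 hp0T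
    rwa [mul_inv_cancel_left] at this
  have runstep : ∀ (l : List (Fin n)) (p : Fin d),
      v (runL c hS l p) = ζ ^ l.length * v p := by
    intro l
    induction l with
    | nil => intro p; simp
    | cons a t ih =>
        intro p
        rw [runL_cons, ih, key p ((hmemT p).mp (Tall p)) a, List.length_cons, pow_succ]
        ring
  intro m hm
  obtain ⟨w, hw⟩ := exists_word_of_pos c hS A hA m (c 1) (c 1) hm
  have := runstep (List.ofFn w) (c 1)
  rw [hw, List.length_ofFn] at this
  have hvu : v (c 1) ≠ 0 := by
    intro h0
    have := (hmemT (c 1)).mp (Tall (c 1))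
    rw [h0] at this
    simp at this
    exact absurd this.symm (ne_of_gt hVpos)
  have h2 : ζ ^ m * v (c 1) = 1 * v (c 1) := by rw [one_mul, ← this]
  exact mul_right_cancel₀ hvu h2

end MPR4

namespace MPR5
open MPR MPR2 MPR3 MPR4

/-- bound on the geometric factor along the twisted segment -/
lemma inv_one_sub_bound (ω : ℂ) (hω : ‖ω‖ = 1) (hω1 : ω ≠ 1) :
    ∃ δ : ℝ, 0 < δ ∧ ∀ t : ℝ, 0 ≤ t → t ≤ 1 →
      ‖(1 - (t : ℂ) * ω)⁻¹‖ ≤ δ⁻¹ := by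
  have hre : ω.re < 1 := by
    rcases lt_or_eq_of_le (le_trans (Complex.re_le_norm ω) hω.le) with h | h
    · exact h
    · exfalso
      apply hω1
      have hnsq : Complex.normSq ω = 1 := by
        rw [Complex.normSq_eq_norm_sq, hω]; norm_num
      rw [Complex.normSq_apply, h] at hnsq
      have him : ω.im = 0 := by nlinarith
      apply Complex.ext <;> simp [h, him]
  refine ⟨min 1 (1 - ω.re), by simp [hre], ?_⟩
  intro t ht0 ht1
  have hlow : min 1 (1 - ω.re) ≤ ‖1 - (t : ℂ) * ω‖ := by
    have hre2 : (1 - (t : ℂ) * ω).re = 1 - t * ω.re := by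
      simp [Complex.sub_re, Complex.re_ofReal_mul]
    calc min 1 (1 - ω.re) ≤ 1 - t * ω.re := by
          rcases le_or_gt ω.re 0 with h | h
          · have : 0 ≤ -(t * ω.re) := by nlinarith
            calc min 1 (1 - ω.re) ≤ 1 := min_le_left _ _
              _ ≤ 1 - t * ω.re := by linarith
          · have : t * ω.re ≤ ω.re := by nlinarith
            calc min 1 (1 - ω.re) ≤ 1 - ω.re := min_le_right _ _
              _ ≤ 1 - t * ω.re := by linarith
      _ ≤ (1 - (t : ℂ) * ω).re := by rw [hre2]
      _ ≤ ‖1 - (t : ℂ) * ω‖ := Complex.re_le_norm _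
  rw [norm_inv]
  exact inv_anti₀ (by simp [hre]) hlow

/-- choosing `t` close to 1 with `t ^ M` at least 1/2 -/
lemma exists_t (M : ℕ) : ∃ t : ℝ, 0 ≤ t ∧ t < 1 ∧ (1 : ℝ) / 2 ≤ t ^ M := by
  refine ⟨1 - 1 / (2 * (M + 1)), by
    have : (1 : ℝ) / (2 * (M + 1)) ≤ 1 / 2 := by
      apply div_le_div_of_nonneg_left <;> [norm_num; norm_num; (push_cast; linarith)]
    linarith, by
    have : (0 : ℝ) < 1 / (2 * (M + 1)) := by positivity
    linarith, ?_⟩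
  have hb := one_add_mul_le_pow (a := -(1 / (2 * ((M : ℝ) + 1)))) (by
    have h04 : (1 : ℝ) / (2 * (M + 1)) ≤ 1 / 2 := by
      apply div_le_div_of_nonneg_left <;> [norm_num; norm_num; (push_cast; linarith)]
    linarith) M
  have h1 : 1 + (M : ℝ) * -(1 / (2 * ((M : ℝ) + 1))) = 1 - (M : ℝ) / (2 * ((M : ℝ) + 1)) := by
    ring
  have h2 : (M : ℝ) / (2 * ((M : ℝ) + 1)) ≤ 1 / 2 := by
    rw [div_le_div_iff₀ (by positivity) (by norm_num)]
    nlinarith [Nat.cast_nonneg (α := ℝ) M]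
  have h3 : (1 : ℝ) + -(1 / (2 * ((M : ℝ) + 1))) = 1 - 1 / (2 * ((M : ℝ) + 1)) := by ring
  rw [h3, h1] at hb
  push_cast
  linarith

/-- uniform bound of the generating function entry on the twisted segment -/
lemma segment_bound (d : ℕ) (B : Matrix (Fin d) (Fin d) ℕ) (w0 : ℂ) (u v : Fin d)
    (hdet : ∀ t : ℝ, t ∈ Set.Icc (0 : ℝ) 1 →
      ((1 : Matrix (Fin d) (Fin d) ℂ) - ((t : ℂ) * w0) • Ac B).det ≠ 0) :
    ∃ C : ℝ, ∀ t : ℝ, t ∈ Set.Icc (0 : ℝ) 1 →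
      ‖(((1 - ((t : ℂ) * w0) • Ac B).det)⁻¹)
        * (1 - ((t : ℂ) * w0) • Ac B).adjugate u v‖ ≤ C := by
  set Mf : ℝ → Matrix (Fin d) (Fin d) ℂ := fun t => 1 - ((t : ℂ) * w0) • Ac B with hMf
  have hcont : Continuous Mf := by
    apply Continuous.sub continuous_const
    exact ((Complex.continuous_ofReal.mul continuous_const)).smul continuous_const
  have hcd : Continuous fun t => ‖(Mf t).det‖ :=
    continuous_norm.comp hcont.matrix_det
  have hca : Continuous fun t => ‖(Mf t).adjugate u v‖ :=
    continuous_norm.comp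
      (((continuous_apply v).comp ((continuous_apply u).comp hcont.matrix_adjugate)))
  obtain ⟨t1, ht1, hmin⟩ := IsCompact.exists_isMinOn (isCompact_Icc (a := (0:ℝ)) (b := 1))
    ⟨0, by norm_num⟩ hcd.continuousOn
  obtain ⟨t2, ht2, hmax⟩ := IsCompact.exists_isMaxOn (isCompact_Icc (a := (0:ℝ)) (b := 1))
    ⟨0, by norm_num⟩ hca.continuousOn
  have hεpos : 0 < ‖(Mf t1).det‖ := by
    rcases (norm_nonneg ((Mf t1).det)).lt_or_eq with h | h
    · exact h
    · exact absurd (norm_eq_zero.mp h.symm) (hdet t1 ht1)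
  refine ⟨‖(Mf t2).adjugate u v‖ / ‖(Mf t1).det‖, ?_⟩
  intro t ht
  rw [norm_mul, norm_inv, mul_comm, ← div_eq_mul_inv]
  apply div_le_div₀ (norm_nonneg _) (hmax ht) hεpos (hmin ht)

end MPR5

namespace MPR6
open MPR MPR2 MPR3 MPR4 MPR5

variable {n d : ℕ} (c : FreeGroup (Fin n) → Fin d)
variable (hS : Function.Surjective c)
variable (hrc : ∀ x y z : FreeGroup (Fin n), c (x * z) = c (y * z) ↔ c x = c y)
variable (A : Matrix (Fin d) (Fin d) ℕ)
variable (hA : ∀ p q, A p q = (Finset.univ.filter (fun a : Fin n => estep c hS a p = q)).card)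

include hrc hA in
lemma growth [NeZero n] (u v : Fin d) :
    ∃ Cg : ℕ, 0 < Cg ∧ ∀ L : ℕ, ∃ m : ℕ, L ≤ m ∧ n ^ m ≤ Cg * ((A ^ m) u v) := by
  have hd0 : 0 < d := Fin.pos u
  have hn0 : 0 < n := Nat.pos_of_ne_zero (NeZero.ne n)
  have hl : ∀ q : Fin d, ∃ l : List (Fin n), runL c hS l q = v :=
    fun q => reach_all c hS hrc q v
  set ℓf : Fin d → List (Fin n) := fun q => (hl q).choose with hℓf
  set Bs : ℕ := ∑ q, (ℓf q).length with hBs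
  refine ⟨d * n ^ Bs, by positivity, ?_⟩
  intro L
  obtain ⟨q0, -, hq0⟩ := Finset.exists_max_image Finset.univ (fun q => (A ^ L) u q)
    ⟨u, Finset.mem_univ u⟩
  have hle : n ^ L ≤ d * (A ^ L) u q0 := by
    calc n ^ L = ∑ q, (A ^ L) u q := (pow_row_sum c hS A hA L u).symm
      _ ≤ Finset.univ.card • ((A ^ L) u q0) :=
          Finset.sum_le_card_nsmul Finset.univ _ _ (fun q _ => hq0 q (Finset.mem_univ q))
      _ = d * (A ^ L) u q0 := by rw [smul_eq_mul, Finset.card_univ, Fintype.card_fin]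
  refine ⟨L + (ℓf q0).length, Nat.le_add_right _ _, ?_⟩
  have h1 : 0 < (A ^ (ℓf q0).length) q0 v := by
    have := pos_of_list c hS A hA (ℓf q0) q0
    rwa [(hl q0).choose_spec] at this
  have h2 : (A ^ L) u q0 * (A ^ (ℓf q0).length) q0 v ≤ (A ^ (L + (ℓf q0).length)) u v :=
    pos_mul A L (ℓf q0).length u q0 v
  have h3 : (A ^ L) u q0 ≤ (A ^ (L + (ℓf q0).length)) u v := by
    calc (A ^ L) u q0 = (A ^ L) u q0 * 1 := (mul_one _).symm
      _ ≤ (A ^ L) u q0 * (A ^ (ℓf q0).length) q0 v := Nat.mul_le_mul_left _ h1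
      _ ≤ _ := h2
  have hlen : (ℓf q0).length ≤ Bs :=
    Finset.single_le_sum (f := fun q => (ℓf q).length) (fun q _ => Nat.zero_le _)
      (Finset.mem_univ q0)
  calc n ^ (L + (ℓf q0).length) = n ^ L * n ^ (ℓf q0).length := pow_add n _ _
    _ ≤ (d * (A ^ L) u q0) * n ^ Bs :=
        Nat.mul_le_mul hle (Nat.pow_le_pow_right hn0 hlen)
    _ = d * n ^ Bs * ((A ^ L) u q0) := by ring
    _ ≤ d * n ^ Bs * ((A ^ (L + (ℓf q0).length)) u v) := Nat.mul_le_mul_left _ h3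

end MPR6

namespace MPR7
open MPR MPR2 MPR3 MPR4 MPR5 MPR6

variable {n d : ℕ} (c : FreeGroup (Fin n) → Fin d)
variable (hS : Function.Surjective c)
variable (hrc : ∀ x y z : FreeGroup (Fin n), c (x * z) = c (y * z) ↔ c x = c y)
variable (A : Matrix (Fin d) (Fin d) ℕ)
variable (hA : ∀ p q, A p q = (Finset.univ.filter (fun a : Fin n => estep c hS a p = q)).card)

include hrc hA in
lemma unbounded [NeZero n] (u v : Fin d) (R : ℝ) :
    ∃ t : ℝ, 0 ≤ t ∧ t < 1 ∧ R < ∑' m : ℕ, ((A ^ m) u v : ℝ) * (t / n) ^ m := by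
  have hn0 : (0 : ℝ) < n := by
    have := Nat.pos_of_ne_zero (NeZero.ne n)
    exact_mod_cast this
  obtain ⟨Cg, hCg, hgrow⟩ := growth c hS hrc A hA u v
  set ms : ℕ → ℕ := fun j =>
    Nat.rec ((hgrow 0).choose) (fun _ prev => (hgrow (prev + 1)).choose) j with hmsdef
  have hms_spec : ∀ j, n ^ (ms j) ≤ Cg * ((A ^ (ms j)) u v) := by
    intro j
    cases j with
    | zero => exact (hgrow 0).choose_spec.2
    | succ j => exact (hgrow (ms j + 1)).choose_spec.2
  have hms_mono : StrictMono ms := by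
    apply strictMono_nat_of_lt_succ
    intro j
    exact lt_of_lt_of_le (Nat.lt_succ_self _) ((hgrow (ms j + 1)).choose_spec.1)
  obtain ⟨N, hN⟩ := exists_nat_gt (2 * (Cg : ℝ) * (R + 1))
  set Mx : ℕ := ms N with hMx
  obtain ⟨t, ht0, ht1, htM⟩ := exists_t Mx
  refine ⟨t, ht0, ht1, ?_⟩
  have htn : t / n * n = t := div_mul_cancel₀ t (ne_of_gt hn0)
  have htn0 : 0 ≤ t / n := div_nonneg ht0 hn0.le
  have hterm : ∀ m : ℕ, 0 ≤ ((A ^ m) u v : ℝ) * (t / n) ^ m :=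
    fun m => mul_nonneg (Nat.cast_nonneg _) (pow_nonneg htn0 m)
  have hsumm : Summable (fun m : ℕ => ((A ^ m) u v : ℝ) * (t / n) ^ m) := by
    refine Summable.of_nonneg_of_le hterm (fun m => ?_)
      (summable_geometric_of_lt_one ht0 ht1)
    calc ((A ^ m) u v : ℝ) * (t / n) ^ m ≤ (n : ℝ) ^ m * (t / n) ^ m := by
          apply mul_le_mul_of_nonneg_right _ (pow_nonneg htn0 m)
          exact_mod_cast entry_le c hS A hA m u v
      _ = t ^ m := by rw [← mul_pow, mul_comm, htn]
  set S : Finset ℕ := (Finset.range (N + 1)).image ms with hSdef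
  have hlow : ∀ m ∈ S, t ^ Mx / Cg ≤ ((A ^ m) u v : ℝ) * (t / n) ^ m := by
    intro m hm
    obtain ⟨j, hj, rfl⟩ := Finset.mem_image.mp hm
    have hjN : j ≤ N := Nat.lt_succ_iff.mp (Finset.mem_range.mp hj)
    have hmM : ms j ≤ Mx := hms_mono.monotone hjN
    have htpow : t ^ Mx ≤ t ^ (ms j) := pow_le_pow_of_le_one ht0 ht1.le hmM
    have hent : ((n : ℝ)) ^ (ms j) ≤ (Cg : ℝ) * ((A ^ (ms j)) u v : ℝ) := by
      exact_mod_cast hms_spec j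
    have hCg0 : (0 : ℝ) < Cg := by exact_mod_cast hCg
    rw [div_le_iff₀ hCg0]
    calc t ^ Mx ≤ t ^ (ms j) := htpow
      _ = (n : ℝ) ^ (ms j) * (t / n) ^ (ms j) := by
            rw [← mul_pow, mul_comm ((n : ℝ)) (t / (n : ℝ)), htn]
      _ ≤ ((Cg : ℝ) * ((A ^ (ms j)) u v : ℝ)) * (t / n) ^ (ms j) :=
          mul_le_mul_of_nonneg_right hent (pow_nonneg htn0 _)
      _ = ((A ^ (ms j)) u v : ℝ) * (t / n) ^ (ms j) * Cg := by ring
  have hCg0 : (0 : ℝ) < Cg := by exact_mod_cast hCg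
  have hpartial : ∑ m ∈ S, ((A ^ m) u v : ℝ) * (t / n) ^ m
      ≤ ∑' m : ℕ, ((A ^ m) u v : ℝ) * (t / n) ^ m :=
    Summable.sum_le_tsum S (fun i _ => hterm i) hsumm
  have hcardS : S.card = N + 1 := by
    rw [hSdef, Finset.card_image_of_injective _ hms_mono.injective, Finset.card_range]
  have hsum_ge : ((N : ℝ) + 1) * (t ^ Mx / Cg) ≤ ∑ m ∈ S, ((A ^ m) u v : ℝ) * (t / n) ^ m := by
    calc ((N : ℝ) + 1) * (t ^ Mx / Cg) = S.card • (t ^ Mx / Cg) := by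
          rw [hcardS, nsmul_eq_mul]; push_cast; ring
      _ = ∑ _m ∈ S, (t ^ Mx / Cg) := (Finset.sum_const _).symm
      _ ≤ _ := Finset.sum_le_sum hlow
  have h5 : (1 : ℝ) / (2 * Cg) ≤ t ^ Mx / Cg := by
    rw [div_le_div_iff₀ (by positivity) hCg0]
    nlinarith
  have h6 : ((N : ℝ) + 1) * ((1 : ℝ) / (2 * Cg)) ≤ ((N : ℝ) + 1) * (t ^ Mx / Cg) :=
    mul_le_mul_of_nonneg_left h5 (by positivity)
  have h7 : R < ((N : ℝ) + 1) * (1 / (2 * Cg)) := by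
    rw [mul_one_div, lt_div_iff₀ (by positivity)]
    nlinarith
  linarith

end MPR7

open MPR MPR2 MPR3 MPR4 MPR5 MPR6 MPR7 in
/-- For a coset partition of the free group `F_n` (`n ≥ 2`), if the maximal period
`hp k` of the Schreier-graph transition matrices is greater than `1`, then it is
attained at least twice. -/
theorem max_period_repeats
    (n s : ℕ) (hn : 2 ≤ n)
    (H : Fin s → Subgroup (FreeGroup (Fin n))) (α : Fin s → FreeGroup (Fin n))
    (d : Fin s → ℕ) (hd : ∀ i, 1 < d i)
    (hpart : ∀ g : FreeGroup (Fin n), ∃! i : Fin s, g * (α i)⁻¹ ∈ H i)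
    (c : (i : Fin s) → FreeGroup (Fin n) → Fin (d i))
    (hcsurj : ∀ i, Function.Surjective (c i))
    (hc : ∀ (i : Fin s) (x y : FreeGroup (Fin n)), c i x = c i y ↔ x * y⁻¹ ∈ H i)
    (A : (i : Fin s) → Matrix (Fin (d i)) (Fin (d i)) ℕ)
    (hA : ∀ (i : Fin s) (p q : Fin (d i)), A i p q =
      Set.ncard {a : Fin n | ∃ g, c i g = p ∧ c i (g * FreeGroup.of a) = q})
    (hp : Fin s → ℕ)
    (hpdvd : ∀ (i : Fin s) (m : ℕ), 0 < m → 0 < ((A i) ^ m) (c i 1) (c i 1) → hp i ∣ m)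
    (hpgcd : ∀ (i : Fin s) (e : ℕ),
      (∀ m : ℕ, 0 < m → 0 < ((A i) ^ m) (c i 1) (c i 1) → e ∣ m) → e ∣ hp i)
    (k : Fin s) (hmax : ∀ i, hp i ≤ hp k) (hk : 1 < hp k) :
    ∃ j : Fin s, j ≠ k ∧ hp j = hp k := by
  haveI : NeZero n := ⟨by omega⟩
  -- right-coset compatibility
  have hrc : ∀ i (x y z : FreeGroup (Fin n)), c i (x * z) = c i (y * z) ↔ c i x = c i y := by
    intro i x y z
    rw [hc i (x * z) (y * z), hc i x y]
    have : x * z * (y * z)⁻¹ = x * y⁻¹ := by group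
    rw [this]
  -- counting form of the matrix hypothesis
  have hA' : ∀ i (p q : Fin (d i)), A i p q =
      (Finset.univ.filter (fun a : Fin n => estep (c i) (hcsurj i) a p = q)).card := by
    intro i p q
    rw [hA]
    have hset : {a : Fin n | ∃ g, c i g = p ∧ c i (g * FreeGroup.of a) = q}
        = {a : Fin n | estep (c i) (hcsurj i) a p = q} := by
      ext a
      simp only [Set.mem_setOf_eq]
      constructor
      · rintro ⟨g, hg1, hg2⟩
        rw [← hg1, estep_c (c i) (hcsurj i) (hrc i), hg2]
      · intro h
        exact ⟨Function.surjInv (hcsurj i) p, Function.surjInv_eq _ _, by rw [← h]; rfl⟩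
    rw [hset]
    have hco : {a : Fin n | estep (c i) (hcsurj i) a p = q}
        = ↑(Finset.univ.filter (fun a : Fin n => estep (c i) (hcsurj i) a p = q)) := by
      ext a; simp
    rw [hco, Set.ncard_coe_finset]
  -- periods are positive
  have hppos : ∀ i, 0 < hp i := by
    intro i
    obtain ⟨m, hm0, hmrun⟩ := exists_closed_walk (c i) (hcsurj i) (hrc i) (c i 1)
    have hpos := pos_of_list (c i) (hcsurj i) (A i) (hA' i) (List.replicate m 0) (c i 1)
    rw [hmrun, List.length_replicate] at hpos
    have hdvd := hpdvd i m hm0 hpos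
    rcases Nat.eq_zero_or_pos (hp i) with h0 | h0
    · rw [h0, zero_dvd_iff] at hdvd
      omega
    · exact h0
  by_contra hcon
  push_neg at hcon
  -- the primitive root
  set ζ : ℂ := Complex.exp (2 * Real.pi * Complex.I / (hp k)) with hζdef
  have hζ : IsPrimitiveRoot ζ (hp k) := Complex.isPrimitiveRoot_exp (hp k) (by omega)
  have hζabs : ‖ζ‖ = 1 := by
    have hpow : ‖ζ‖ ^ (hp k) = 1 := by
      rw [← norm_pow, hζ.pow_eq_one, norm_one]
    rcases lt_trichotomy (‖ζ‖) 1 with h | h | h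
    · exfalso
      have := pow_lt_one₀ (norm_nonneg ζ) h (by omega : hp k ≠ 0)
      rw [hpow] at this
      exact lt_irrefl _ this
    · exact h
    · exfalso
      have := one_lt_pow₀ h (by omega : hp k ≠ 0)
      rw [hpow] at this
      exact lt_irrefl _ this
  have hζne0 : ζ ≠ 0 := by
    intro h
    rw [h] at hζabs
    simp at hζabs
  have hζne1 : ζ ≠ 1 := hζ.ne_one hk
  set w0 : ℂ := ζ⁻¹ / (n : ℂ) with hw0def
  have hnC : ((n : ℂ)) ≠ 0 := Nat.cast_ne_zero.mpr (NeZero.ne n)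
  have hnormw0 : ‖w0‖ = 1 / n := by
    rw [hw0def, norm_div, norm_inv, hζabs, Complex.norm_natCast, inv_one]
  have hnz : ∀ t : ℝ, 0 ≤ t → t < 1 → (n : ℝ) * ‖(t : ℂ) * w0‖ < 1 := by
    intro t ht0 ht1
    rw [norm_mul, Complex.norm_real, Real.norm_eq_abs, abs_of_nonneg ht0, hnormw0]
    have hn0 : (0 : ℝ) < n := by
      have := Nat.pos_of_ne_zero (NeZero.ne n); exact_mod_cast this
    calc (n : ℝ) * (t * (1 / n)) = t := by field_simp
      _ < 1 := ht1
  -- partition identity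
  have PI : ∀ m : ℕ, ∑ i, ((A i) ^ m) (c i 1) (c i (α i)) = n ^ m := by
    intro m
    have huniq : ∀ w : Fin m → Fin n, ∃! i : Fin s,
        runL (c i) (hcsurj i) (List.ofFn w) (c i 1) = c i (α i) := by
      intro w
      set g : FreeGroup (Fin n) := ((List.ofFn w).map FreeGroup.of).prod with hgdef
      have hrun : ∀ i, runL (c i) (hcsurj i) (List.ofFn w) (c i 1) = c i g := by
        intro i
        have h := runL_c (c i) (hcsurj i) (hrc i) (List.ofFn w) 1
        rw [one_mul] at h
        exact h
      obtain ⟨i0, hi0, hiu⟩ := hpart g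
      refine ⟨i0, ?_, ?_⟩
      · show runL (c i0) (hcsurj i0) (List.ofFn w) (c i0 1) = c i0 (α i0)
        rw [hrun i0]
        exact (hc i0 g (α i0)).mpr hi0
      · intro j hj
        have hj' : runL (c j) (hcsurj j) (List.ofFn w) (c j 1) = c j (α j) := hj
        apply hiu
        rw [hrun j] at hj'
        exact (hc j g (α j)).mp hj'
    set F : (Fin m → Fin n) → Fin s := fun w => (huniq w).choose with hFdef
    have hcard := Finset.card_eq_sum_card_fiberwise
      (f := F) (s := Finset.univ) (t := Finset.univ) (fun w _ => Finset.mem_univ _)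
    have hfix : ∀ i, (Finset.univ.filter (fun w => F w = i)).card
        = ((A i) ^ m) (c i 1) (c i (α i)) := by
      intro i
      rw [CL (c i) (hcsurj i) (A i) (hA' i) m]
      congr 1
      apply Finset.filter_congr
      intro w _
      constructor
      · intro h
        rw [← h]
        exact (huniq w).choose_spec.1
      · intro h
        exact ((huniq w).choose_spec.2 i h).symm
    have huniv : (Finset.univ : Finset (Fin m → Fin n)).card = n ^ m := by
      rw [Finset.card_univ, Fintype.card_fun]
      simp
    calc ∑ i, ((A i) ^ m) (c i 1) (c i (α i))
        = ∑ i, (Finset.univ.filter (fun w => F w = i)).card :=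
          Finset.sum_congr rfl (fun i _ => (hfix i).symm)
      _ = (Finset.univ : Finset (Fin m → Fin n)).card := hcard.symm
      _ = n ^ m := huniv
  -- sum of generating functions
  have SumId : ∀ t : ℝ, 0 ≤ t → t < 1 →
      ∑ i, Mmat (A i) ((t : ℂ) * w0) (c i 1) (c i (α i))
        = (1 - (n : ℂ) * ((t : ℂ) * w0))⁻¹ := by
    intro t ht0 ht1
    have hz : (n : ℝ) * ‖(t : ℂ) * w0‖ < 1 := hnz t ht0 ht1
    have hsumm : ∀ i : Fin s, Summable (fun m : ℕ =>
        (((A i) ^ m) (c i 1) (c i (α i)) : ℂ) * ((t : ℂ) * w0) ^ m) :=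
      fun i => summable_entry (c i) (hcsurj i) (A i) (hA' i) _ hz _ _
    have hMdef : ∀ i : Fin s, Mmat (A i) ((t : ℂ) * w0) (c i 1) (c i (α i))
        = ∑' m : ℕ, (((A i) ^ m) (c i 1) (c i (α i)) : ℂ) * ((t : ℂ) * w0) ^ m :=
      fun i => rfl
    calc ∑ i, Mmat (A i) ((t : ℂ) * w0) (c i 1) (c i (α i))
        = ∑ i, ∑' m : ℕ, (((A i) ^ m) (c i 1) (c i (α i)) : ℂ) * ((t : ℂ) * w0) ^ m :=
          Finset.sum_congr rfl (fun i _ => hMdef i)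
      _ = ∑' m : ℕ, ∑ i, (((A i) ^ m) (c i 1) (c i (α i)) : ℂ) * ((t : ℂ) * w0) ^ m :=
          (Summable.tsum_finsetSum (fun i _ => hsumm i)).symm
      _ = ∑' m : ℕ, ((n : ℂ) * ((t : ℂ) * w0)) ^ m := by
          apply tsum_congr
          intro m
          rw [← Finset.sum_mul]
          have hPIc : (∑ i, (((A i) ^ m) (c i 1) (c i (α i)) : ℂ)) = ((n : ℂ)) ^ m := by
            rw [← Nat.cast_sum]
            rw [PI m]
            push_cast
            ring
          rw [hPIc]
          ring
      _ = (1 - (n : ℂ) * ((t : ℂ) * w0))⁻¹ := by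
          apply tsum_geometric_of_norm_lt_one
          rw [norm_mul, Complex.norm_natCast]
          exact hz
  -- determinant nonvanishing for j ≠ k on the closed segment
  have hdetne : ∀ j, j ≠ k → ∀ t : ℝ, t ∈ Set.Icc (0 : ℝ) 1 →
      ((1 : Matrix (Fin (d j)) (Fin (d j)) ℂ) - ((t : ℂ) * w0) • Ac (A j)).det ≠ 0 := by
    intro j hj t ht
    rcases lt_or_eq_of_le ht.2 with h1 | h1
    · exact det_one_sub_ne_zero (c j) (hcsurj j) (A j) (hA' j) _ (hnz t ht.1 h1)
    · subst h1
      intro hdet0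
      obtain ⟨v, hvne, hveq⟩ := (Matrix.exists_mulVec_eq_zero_iff).mpr hdet0
      have hw0ne : w0 ≠ 0 := by
        rw [hw0def]
        exact div_ne_zero (inv_ne_zero hζne0) hnC
      have hone : ((1 : ℝ) : ℂ) * w0 = w0 := by rw [Complex.ofReal_one, one_mul]
      rw [hone, Matrix.sub_mulVec, Matrix.one_mulVec, Matrix.smul_mulVec,
        sub_eq_zero] at hveq
      have heig : (Ac (A j)).mulVec v = ((n : ℂ) * ζ) • v := by
        have h2 : w0⁻¹ • v = w0⁻¹ • (w0 • (Ac (A j)).mulVec v) := by rw [← hveq]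
        rw [smul_smul, inv_mul_cancel₀ hw0ne, one_smul] at h2
        rw [← h2]
        congr 1
        rw [hw0def, inv_div, div_eq_mul_inv, inv_inv]
      have hspec := spectral (c j) (hcsurj j) (hrc j) (A j) (hA' j) ζ hζabs v hvne heig
      have hdv : hp k ∣ hp j :=
        hpgcd j (hp k) (fun m _ hpos => (hζ.pow_eq_one_iff_dvd m).mp (hspec m hpos))
      have h3 := Nat.le_of_dvd (hppos j) hdv
      have h4 := hmax j
      have h5 := hcon j hj
      omega
  -- uniform bounds for j ≠ k
  have hB : ∀ j, j ≠ k → ∃ C : ℝ, ∀ t : ℝ, 0 ≤ t → t < 1 →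
      ‖Mmat (A j) ((t : ℂ) * w0) (c j 1) (c j (α j))‖ ≤ C := by
    intro j hj
    obtain ⟨C, hC⟩ := segment_bound (d j) (A j) w0 (c j 1) (c j (α j)) (hdetne j hj)
    refine ⟨C, fun t ht0 ht1 => ?_⟩
    rw [Mmat_eq_adjugate (c j) (hcsurj j) (A j) (hA' j) _ (hnz t ht0 ht1)]
    exact hC t ⟨ht0, ht1.le⟩
  set Bf : Fin s → ℝ := fun j => if hj : j = k then 0 else (hB j hj).choose with hBfdef
  have hBf : ∀ j (hj : j ≠ k), ∀ t : ℝ, 0 ≤ t → t < 1 →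
      ‖Mmat (A j) ((t : ℂ) * w0) (c j 1) (c j (α j))‖ ≤ Bf j := by
    intro j hj t ht0 ht1
    have : Bf j = (hB j hj).choose := by rw [hBfdef]; simp [dif_neg hj]
    rw [this]
    exact (hB j hj).choose_spec t ht0 ht1
  -- the geometric factor bound
  have hωabs : ‖ζ⁻¹‖ = 1 := by rw [norm_inv, hζabs, inv_one]
  have hωne1 : ζ⁻¹ ≠ 1 := by
    intro h
    apply hζne1
    rw [← inv_inv ζ, h, inv_one]
  obtain ⟨δ, hδpos, hδ⟩ := inv_one_sub_bound ζ⁻¹ hωabs hωne1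
  have hrwn : ∀ t : ℝ, (n : ℂ) * ((t : ℂ) * w0) = (t : ℂ) * ζ⁻¹ := by
    intro t
    rw [hw0def]
    field_simp
  -- alignment at index k
  obtain ⟨luv, hluv⟩ := reach_all (c k) (hcsurj k) (hrc k) (c k 1) (c k (α k))
  have hfm0 : 0 < ((A k) ^ luv.length) (c k 1) (c k (α k)) := by
    have := pos_of_list (c k) (hcsurj k) (A k) (hA' k) luv (c k 1)
    rwa [hluv] at this
  obtain ⟨lvu, hlvu⟩ := reach_all (c k) (hcsurj k) (hrc k) (c k (α k)) (c k 1)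
  obtain ⟨t0, ht0pos, ht0run⟩ := exists_closed_walk (c k) (hcsurj k) (hrc k) (c k 1)
  set m0 : ℕ := luv.length with hm0def
  set ℓplus : ℕ := lvu.length + t0 with hℓdef
  have hclosed : ∀ m : ℕ, 0 < ((A k) ^ m) (c k 1) (c k (α k)) → hp k ∣ (m + ℓplus) := by
    intro m hm
    have h1 : 0 < ((A k) ^ lvu.length) (c k (α k)) (c k 1) := by
      have := pos_of_list (c k) (hcsurj k) (A k) (hA' k) lvu (c k (α k))
      rwa [hlvu] at this
    have h2 : 0 < ((A k) ^ t0) (c k 1) (c k 1) := by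
      have := pos_of_list (c k) (hcsurj k) (A k) (hA' k) (List.replicate t0 0) (c k 1)
      rwa [ht0run, List.length_replicate] at this
    have h3 : 0 < ((A k) ^ (m + lvu.length)) (c k 1) (c k 1) :=
      lt_of_lt_of_le (Nat.mul_pos hm h1) (pos_mul (A k) m lvu.length _ _ _)
    have h4 : 0 < ((A k) ^ (m + lvu.length + t0)) (c k 1) (c k 1) :=
      lt_of_lt_of_le (Nat.mul_pos h3 h2) (pos_mul (A k) (m + lvu.length) t0 _ _ _)
    have h5 : m + ℓplus = m + lvu.length + t0 := by rw [hℓdef]; ring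
    rw [h5]
    exact hpdvd k _ (by omega) h4
  have hres : ∀ m : ℕ, 0 < ((A k) ^ m) (c k 1) (c k (α k)) → (ζ⁻¹) ^ m = (ζ⁻¹) ^ m0 := by
    intro m hm
    have e1 : ζ ^ (m + ℓplus) = 1 := (hζ.pow_eq_one_iff_dvd _).mpr (hclosed m hm)
    have e2 : ζ ^ (m0 + ℓplus) = 1 := (hζ.pow_eq_one_iff_dvd _).mpr (hclosed m0 hfm0)
    have e3 : ζ ^ m * ζ ^ ℓplus = ζ ^ m0 * ζ ^ ℓplus := by
      rw [← pow_add, ← pow_add, e1, e2]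
    have e4 : ζ ^ m = ζ ^ m0 := mul_right_cancel₀ (pow_ne_zero _ hζne0) e3
    rw [inv_pow, inv_pow, e4]
  have halign : ∀ t : ℝ, 0 ≤ t → t < 1 →
      ‖Mmat (A k) ((t : ℂ) * w0) (c k 1) (c k (α k))‖
        = ∑' m : ℕ, (((A k) ^ m) (c k 1) (c k (α k)) : ℝ) * (t / n) ^ m := by
    intro t ht0 ht1
    have hterm : ∀ m : ℕ, (((A k) ^ m) (c k 1) (c k (α k)) : ℂ) * ((t : ℂ) * w0) ^ m
        = (ζ⁻¹) ^ m0 * (((((A k) ^ m) (c k 1) (c k (α k)) : ℝ) * (t / n) ^ m : ℝ) : ℂ) := by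
      intro m
      by_cases hzero : ((A k) ^ m) (c k 1) (c k (α k)) = 0
      · rw [hzero]
        push_cast
        ring
      · have hposm : 0 < ((A k) ^ m) (c k 1) (c k (α k)) := Nat.pos_of_ne_zero hzero
        have hzfact : ((t : ℂ) * w0) ^ m = (((t / n : ℝ) : ℂ)) ^ m * (ζ⁻¹) ^ m := by
          rw [← mul_pow]
          congr 1
          rw [hw0def]
          push_cast
          ring
        rw [hzfact, hres m hposm]
        push_cast
        ring
    have hMk : Mmat (A k) ((t : ℂ) * w0) (c k 1) (c k (α k))
        = ∑' m : ℕ, (((A k) ^ m) (c k 1) (c k (α k)) : ℂ) * ((t : ℂ) * w0) ^ m := rfl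
    rw [hMk, tsum_congr hterm, tsum_mul_left]
    have hcast : ∑' m : ℕ, (((((A k) ^ m) (c k 1) (c k (α k)) : ℝ) * (t / n) ^ m : ℝ) : ℂ)
        = ((∑' m : ℕ, ((((A k) ^ m) (c k 1) (c k (α k)) : ℝ) * (t / n) ^ m) : ℝ) : ℂ) :=
      (Complex.ofReal_tsum _).symm
    rw [hcast, norm_mul, norm_pow, hωabs, one_pow, one_mul, Complex.norm_real, Real.norm_eq_abs]
    apply abs_of_nonneg
    apply tsum_nonneg
    intro m
    apply mul_nonneg (Nat.cast_nonneg _)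
    apply pow_nonneg
    apply div_nonneg ht0
    exact Nat.cast_nonneg n
  -- the contradiction
  set R : ℝ := δ⁻¹ + ∑ j ∈ Finset.univ.erase k, Bf j with hRdef
  obtain ⟨t, ht0, ht1, hgt⟩ :=
    unbounded (c k) (hcsurj k) (hrc k) (A k) (hA' k) (c k 1) (c k (α k)) R
  have hGk := halign t ht0 ht1
  have hsum := SumId t ht0 ht1
  have hsplit : Mmat (A k) ((t : ℂ) * w0) (c k 1) (c k (α k))
      = (∑ i, Mmat (A i) ((t : ℂ) * w0) (c i 1) (c i (α i)))
        - ∑ j ∈ Finset.univ.erase k, Mmat (A j) ((t : ℂ) * w0) (c j 1) (c j (α j)) := by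
    rw [eq_sub_iff_add_eq]
    exact Finset.add_sum_erase _
      (fun i => Mmat (A i) ((t : ℂ) * w0) (c i 1) (c i (α i))) (Finset.mem_univ k)
  have hbound : ‖Mmat (A k) ((t : ℂ) * w0) (c k 1) (c k (α k))‖ ≤ R := by
    rw [hsplit]
    calc ‖_‖ ≤
        ‖∑ i, Mmat (A i) ((t : ℂ) * w0) (c i 1) (c i (α i))‖
          + ‖∑ j ∈ Finset.univ.erase k,
              Mmat (A j) ((t : ℂ) * w0) (c j 1) (c j (α j))‖ := by
          exact norm_sub_le _ _
      _ ≤ δ⁻¹ + ∑ j ∈ Finset.univ.erase k, Bf j := by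
          apply add_le_add
          · rw [hsum, hrwn t]
            exact hδ t ht0 ht1.le
          · calc ‖∑ j ∈ Finset.univ.erase k,
                Mmat (A j) ((t : ℂ) * w0) (c j 1) (c j (α j))‖
                ≤ ∑ j ∈ Finset.univ.erase k,
                    ‖Mmat (A j) ((t : ℂ) * w0) (c j 1) (c j (α j))‖ :=
                  norm_sum_le _ _
              _ ≤ ∑ j ∈ Finset.univ.erase k, Bf j :=
                  Finset.sum_le_sum (fun j hj =>
                    hBf j (Finset.ne_of_mem_erase hj) t ht0 ht1)
      _ = R := hRdef.symm
  rw [hGk] at hbound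
  linarith
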